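/- Let A ∈ ℝ^{m×n}, σ = ‖A‖² (the square of the operator 2-norm), and let v ∈ ℝⁿ with ‖v‖ = 1 not be a dominant right singular vector of A (i.e., ‖Av‖² < σ). Define u = (σv − AᵀAv)/√(σ − ‖Av‖²). Then H = σI − uuᵀ satisfies vᵀ(H − AᵀA)v = 0 and H ⪰ AᵀA. -/

import Mathlib

open Matrix

/-- The operator 2-norm of a real matrix. -/
noncomputable def matOpNorm {m n : ℕ} (A : Matrix (Fin m) (Fin n) ℝ) : ℝ :=
  ‖(Matrix.toEuclideanLin A).toContinuousLinearMap‖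

lemma euclid_norm_sq {k : ℕ} (y : Fin k → ℝ) :
    ‖(WithLp.equiv 2 (Fin k → ℝ)).symm y‖ ^ 2 = y ⬝ᵥ y := by
  rw [EuclideanSpace.norm_eq, Real.sq_sqrt (by positivity)]
  simp [dotProduct, Real.norm_eq_abs, sq_abs, sq]

lemma mulVec_dot_le {m n : ℕ} (A : Matrix (Fin m) (Fin n) ℝ) (x : Fin n → ℝ) :
    (A.mulVec x) ⬝ᵥ (A.mulVec x) ≤ (matOpNorm A)^2 * (x ⬝ᵥ x) := by
  have h := (Matrix.toEuclideanLin A).toContinuousLinearMap.le_opNorm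
      ((WithLp.equiv 2 (Fin n → ℝ)).symm x)
  have h2 := pow_le_pow_left₀ (norm_nonneg _) h 2
  have heq : (Matrix.toEuclideanLin A).toContinuousLinearMap
      ((WithLp.equiv 2 (Fin n → ℝ)).symm x) =
      (WithLp.equiv 2 (Fin m → ℝ)).symm (A.mulVec x) := rfl
  rw [heq, euclid_norm_sq, mul_pow, euclid_norm_sq] at h2
  exact h2

/-- Cauchy–Schwarz for a PSD real matrix. -/
lemma psd_cauchy_schwarz {n : ℕ} {C : Matrix (Fin n) (Fin n) ℝ}
    (hC : C.PosSemidef) (v x : Fin n → ℝ) :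
    (v ⬝ᵥ C.mulVec x) ^ 2 ≤ (v ⬝ᵥ C.mulVec v) * (x ⬝ᵥ C.mulVec x) := by
  have hCt : Cᵀ = C := by
    have h := hC.1
    rwa [Matrix.IsHermitian, Matrix.conjTranspose_eq_transpose_of_trivial] at h
  have hsym : ∀ a b : Fin n → ℝ, a ⬝ᵥ C.mulVec b = b ⬝ᵥ C.mulVec a := by
    intro a b
    rw [Matrix.dotProduct_mulVec, ← Matrix.mulVec_transpose, hCt, dotProduct_comm]
  have key : ∀ t : ℝ, 0 ≤ (v ⬝ᵥ C.mulVec v) * (t * t) +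
      (2 * (v ⬝ᵥ C.mulVec x)) * t + (x ⬝ᵥ C.mulVec x) := by
    intro t
    have h := hC.dotProduct_mulVec_nonneg (t • v + x)
    simp only [star_trivial] at h
    have expand : (t • v + x) ⬝ᵥ C.mulVec (t • v + x) =
        (v ⬝ᵥ C.mulVec v) * (t * t) + (2 * (v ⬝ᵥ C.mulVec x)) * t + (x ⬝ᵥ C.mulVec x) := by
      rw [Matrix.mulVec_add, Matrix.mulVec_smul]
      simp only [add_dotProduct, dotProduct_add, smul_dotProduct,
        dotProduct_smul, smul_eq_mul]
      rw [hsym x v]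
      ring
    linarith [expand ▸ h]
  have hd := discrim_le_zero key
  unfold discrim at hd
  nlinarith [hd]

/-- IMRO-1D: with `σ = ‖A‖²`, `v` a unit vector with `‖Av‖² < σ`, and
`u = (σv − AᵀAv)/√(σ − ‖Av‖²)`, the matrix `H = σI − uuᵀ` satisfies
`vᵀ(H − AᵀA)v = 0` and `H ⪰ AᵀA`. -/
theorem imro1d_sigma_u {m n : ℕ} (A : Matrix (Fin m) (Fin n) ℝ)
    (v : Fin n → ℝ) (hv : v ⬝ᵥ v = 1)
    (hdom : (A.mulVec v) ⬝ᵥ (A.mulVec v) < (matOpNorm A)^2) :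
    let σ : ℝ := (matOpNorm A)^2
    let u : Fin n → ℝ :=
      (Real.sqrt (σ - (A.mulVec v) ⬝ᵥ (A.mulVec v)))⁻¹ •
        (σ • v - (Aᵀ * A).mulVec v)
    let H : Matrix (Fin n) (Fin n) ℝ := σ • (1 : Matrix (Fin n) (Fin n) ℝ) - vecMulVec u u
    v ⬝ᵥ ((H - Aᵀ * A).mulVec v) = 0 ∧ (H - Aᵀ * A).PosSemidef := by
  intro σ u H
  have hσ : σ = (matOpNorm A)^2 := rfl
  set B : Matrix (Fin n) (Fin n) ℝ := Aᵀ * A with hB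
  set C : Matrix (Fin n) (Fin n) ℝ := σ • (1 : Matrix (Fin n) (Fin n) ℝ) - B with hCdef
  -- basic conversion: xᵀBx = ‖Ax‖²
  have hBx : ∀ x : Fin n → ℝ, x ⬝ᵥ B.mulVec x = (A.mulVec x) ⬝ᵥ (A.mulVec x) := by
    intro x
    rw [hB, ← Matrix.mulVec_mulVec, Matrix.dotProduct_mulVec, Matrix.vecMul_transpose]
  -- C is PSD
  have hCpsd : C.PosSemidef := by
    apply Matrix.PosSemidef.of_dotProduct_mulVec_nonneg
    · simp only [hCdef, hB]
      unfold Matrix.IsHermitian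
      rw [Matrix.conjTranspose_sub, Matrix.conjTranspose_smul]
      simp [Matrix.conjTranspose_mul]
    · intro x
      simp only [star_trivial, hCdef, Matrix.sub_mulVec, dotProduct_sub,
        Matrix.smul_mulVec, Matrix.one_mulVec, dotProduct_smul, smul_eq_mul]
      rw [hBx x, hσ]
      have := mulVec_dot_le A x
      linarith
  -- δ
  set δ : ℝ := σ - (A.mulVec v) ⬝ᵥ (A.mulVec v) with hδ
  have hδpos : 0 < δ := by rw [hδ, hσ]; linarith
  have hCv : C.mulVec v = σ • v - B.mulVec v := by
    simp [hCdef, Matrix.sub_mulVec, Matrix.smul_mulVec]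
  have hu : u = (Real.sqrt δ)⁻¹ • C.mulVec v := by
    rw [hCv]
  have hvCv : v ⬝ᵥ C.mulVec v = δ := by
    rw [hCv]
    simp only [dotProduct_sub, dotProduct_smul, smul_eq_mul, hv, mul_one]
    rw [hBx v]
  have hsqrt : Real.sqrt δ ^ 2 = δ := Real.sq_sqrt hδpos.le
  have hsqrtpos : 0 < Real.sqrt δ := Real.sqrt_pos.mpr hδpos
  -- u ⬝ᵥ x
  have hudot : ∀ x : Fin n → ℝ, u ⬝ᵥ x = (Real.sqrt δ)⁻¹ * (v ⬝ᵥ C.mulVec x) := by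
    intro x
    rw [hu]
    rw [smul_dotProduct, smul_eq_mul]
    congr 1
    have hCt : Cᵀ = C := by
      have h := hCpsd.1
      rwa [Matrix.IsHermitian, Matrix.conjTranspose_eq_transpose_of_trivial] at h
    rw [dotProduct_comm, Matrix.dotProduct_mulVec, ← Matrix.mulVec_transpose, hCt]
    exact dotProduct_comm _ _
  -- quadratic form of H - B
  have hHB : H - B = C - vecMulVec u u := by
    show σ • (1 : Matrix (Fin n) (Fin n) ℝ) - vecMulVec u u - B
      = σ • (1 : Matrix (Fin n) (Fin n) ℝ) - B - vecMulVec u u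
    abel
  have hform : ∀ x : Fin n → ℝ, x ⬝ᵥ (H - B).mulVec x =
      x ⬝ᵥ C.mulVec x - (u ⬝ᵥ x) ^ 2 := by
    intro x
    rw [hHB, Matrix.sub_mulVec, dotProduct_sub]
    congr 1
    have : (vecMulVec u u).mulVec x = (u ⬝ᵥ x) • u := by
      ext i
      simp only [Matrix.mulVec, Matrix.vecMulVec_apply, dotProduct, Pi.smul_apply,
        smul_eq_mul, mul_assoc]
      rw [← Finset.mul_sum, mul_comm]
    rw [this]
    simp only [dotProduct_smul, smul_eq_mul]
    rw [dotProduct_comm]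
    ring
  constructor
  · have hinv : (Real.sqrt δ)⁻¹ ^ 2 = δ⁻¹ := by rw [← hsqrt]; simp [← inv_pow]
    rw [hform v, hvCv, hudot v, hvCv, mul_pow, hinv, sq, ← mul_assoc,
      inv_mul_cancel₀ hδpos.ne', one_mul, sub_self]
  · apply Matrix.PosSemidef.of_dotProduct_mulVec_nonneg
    · rw [hHB]
      unfold Matrix.IsHermitian
      rw [Matrix.conjTranspose_sub, hCpsd.1]
      congr 1
      ext i j
      simp [Matrix.conjTranspose_apply, Matrix.vecMulVec_apply, mul_comm]
    · intro x
      simp only [star_trivial]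
      rw [hform x, hudot x]
      have hcs := psd_cauchy_schwarz hCpsd v x
      rw [hvCv] at hcs
      have hxx : 0 ≤ x ⬝ᵥ C.mulVec x := by simpa using hCpsd.dotProduct_mulVec_nonneg x
      rw [mul_pow]
      have : (Real.sqrt δ)⁻¹ ^ 2 = δ⁻¹ := by
        rw [← hsqrt]; simp [← inv_pow]
      rw [this]
      have h1 : δ⁻¹ * (v ⬝ᵥ C.mulVec x) ^ 2 ≤ δ⁻¹ * (δ * (x ⬝ᵥ C.mulVec x)) := by
        apply mul_le_mul_of_nonneg_left hcs (inv_nonneg.mpr hδpos.le)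
      rw [← mul_assoc, inv_mul_cancel₀ hδpos.ne', one_mul] at h1
      nlinarith [sq_nonneg (v ⬝ᵥ C.mulVec x)]
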